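/- Let T be a triangle-tree on n ≥ 4 vertices with exactly t leaves. Then T contains a removable set of size at least n − t − 1, i.e., an edge set X ⊆ E(T) with |X| ≥ n − t − 1 such that T − X is 2-edge-connected. -/

import Mathlib

open scoped Classical

/-- A finite loopless multigraph: finite vertex and edge types, each edge has an
unordered pair of distinct endpoints (parallel edges allowed, loops forbidden). -/
structure Multigraph where
  V : Type
  E : Type
  fintypeV : Fintype V
  fintypeE : Fintype E
  ends : E → Sym2 V
  loopless : ∀ e, ¬ (ends e).IsDiag

attribute [instance] Multigraph.fintypeV Multigraph.fintypeE

namespace Multigraph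

/-- `D` is an orientation of `G`: each edge is assigned an ordered pair (tail, head)
compatible with its endpoints. -/
def IsOrientation (G : Multigraph) (D : G.E → G.V × G.V) : Prop :=
  ∀ e, G.ends e = s((D e).1, (D e).2)

/-- Out-degree of `v` under the orientation `D` (tail = first component). -/
noncomputable def outDeg (G : Multigraph) (D : G.E → G.V × G.V) (v : G.V) : ℕ :=
  {e : G.E | (D e).1 = v}.ncard

/-- In-degree of `v` under the orientation `D` (head = second component). -/
noncomputable def inDeg (G : Multigraph) (D : G.E → G.V × G.V) (v : G.V) : ℕ :=
  {e : G.E | (D e).2 = v}.ncard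

/-- Flow conservation: at every vertex the sum of `f` over outgoing arcs equals the sum
over incoming arcs. -/
def IsConserving (G : Multigraph) (D : G.E → G.V × G.V) (f : G.E → ℤ) : Prop :=
  ∀ v : G.V,
    (∑ e : G.E, if (D e).1 = v then f e else 0) =
      ∑ e : G.E, if (D e).2 = v then f e else 0

/-- `G` has a nowhere-zero 3-flow. -/
def HasNZ3Flow (G : Multigraph) : Prop :=
  ∃ (D : G.E → G.V × G.V) (f : G.E → ℤ),
    G.IsOrientation D ∧ (∀ e, 1 ≤ |f e| ∧ |f e| ≤ 2) ∧ G.IsConserving D f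

/-- `G` is `Z3`-connected: every `Z3`-boundary is realized by some orientation. -/
def Z3Connected (G : Multigraph) : Prop :=
  ∀ β : G.V → ZMod 3, (∑ v : G.V, β v) = 0 →
    ∃ D : G.E → G.V × G.V, G.IsOrientation D ∧
      ∀ v : G.V, ((G.outDeg D v : ZMod 3) - (G.inDeg D v : ZMod 3)) = β v

/-- Degree of a vertex: number of edges incident with it. -/
noncomputable def degree (G : Multigraph) (v : G.V) : ℕ :=
  {e : G.E | v ∈ G.ends e}.ncard

/-- `(S, F)` is a triangle-tree subgraph of `G`: start from a triangle and repeatedly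
add a new vertex joined to the two endpoints of an existing edge. -/
inductive IsTriangleTree (G : Multigraph) : Set G.V → Set G.E → Prop
  | base (x y z : G.V) (e1 e2 e3 : G.E)
      (hxy : x ≠ y) (hxz : x ≠ z) (hyz : y ≠ z)
      (h1 : G.ends e1 = s(x, y)) (h2 : G.ends e2 = s(y, z)) (h3 : G.ends e3 = s(x, z)) :
      IsTriangleTree G {x, y, z} {e1, e2, e3}
  | grow (S : Set G.V) (F : Set G.E) (hT : IsTriangleTree G S F)
      (v a b : G.V) (hv : v ∉ S) (e : G.E) (he : e ∈ F) (hab : G.ends e = s(a, b))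
      (e1 e2 : G.E) (h1 : G.ends e1 = s(v, a)) (h2 : G.ends e2 = s(v, b)) :
      IsTriangleTree G (insert v S) (insert e1 (insert e2 F))

/-- `G` contains a spanning triangle-tree. -/
def HasSpanningTriangleTree (G : Multigraph) : Prop :=
  ∃ F : Set G.E, G.IsTriangleTree Set.univ F

/-- Degree of `v` inside the edge set `F`. -/
noncomputable def degIn (G : Multigraph) (F : Set G.E) (v : G.V) : ℕ :=
  {e : G.E | e ∈ F ∧ v ∈ G.ends e}.ncard

/-- `(S, F)` is a triangle-path subgraph: a triangle-tree which is either a single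
triangle or has exactly two leaves (vertices of degree 2). -/
def IsTrianglePath (G : Multigraph) (S : Set G.V) (F : Set G.E) : Prop :=
  G.IsTriangleTree S F ∧ (S.ncard = 3 ∨ {v ∈ S | G.degIn F v = 2}.ncard = 2)

/-- `(S, F)` is a subgraph of `G`: endpoints of every chosen edge are chosen vertices. -/
def Subgraph (G : Multigraph) (S : Set G.V) (F : Set G.E) : Prop :=
  ∀ e ∈ F, ∀ v, v ∈ G.ends e → v ∈ S

/-- `G` is isomorphic to the complete (simple) graph on `n` vertices. -/
def IsCompleteGraphOn (G : Multigraph) (n : ℕ) : Prop :=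
  ∃ (φ : G.V ≃ Fin n) (ψ : G.E ≃ {p : Sym2 (Fin n) // ¬ p.IsDiag}),
    ∀ e, Sym2.map (⇑φ) (G.ends e) = (ψ e).1

def IsK3 (G : Multigraph) : Prop := G.IsCompleteGraphOn 3

def IsK4 (G : Multigraph) : Prop := G.IsCompleteGraphOn 4

/-- `G` is a bull-growing of `H` (equivalently, `H` is the bull-reduction of `G`):
`u, v` are adjacent vertices of degree 3 in `G` with common neighbour `w`, the remaining
neighbours of `u`, `v` are `a`, `b`, and `H = G - u - v + ab` (with a loop deleted when
`a = b`). -/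
def IsBullGrowing (G H : Multigraph) : Prop :=
  ∃ (u v w a b : G.V) (euv euw evw eua evb : G.E),
    G.ends euv = s(u, v) ∧ G.ends euw = s(u, w) ∧ G.ends evw = s(v, w) ∧
    G.ends eua = s(u, a) ∧ G.ends evb = s(v, b) ∧
    a ≠ v ∧ b ≠ u ∧
    euv ≠ euw ∧ euv ≠ eua ∧ euw ≠ eua ∧
    euv ≠ evw ∧ euv ≠ evb ∧ evw ≠ evb ∧
    {e : G.E | u ∈ G.ends e} = {euv, euw, eua} ∧
    {e : G.E | v ∈ G.ends e} = {euv, evw, evb} ∧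
    ∃ φ : H.V → G.V, Function.Injective φ ∧
      Set.range φ = {x : G.V | x ≠ u ∧ x ≠ v} ∧
      ((a = b → ∃ ψ : H.E → G.E, Function.Injective ψ ∧
          Set.range ψ = {e : G.E | e ∉ ({euv, euw, evw, eua, evb} : Set G.E)} ∧
          ∀ e, G.ends (ψ e) = Sym2.map φ (H.ends e)) ∧
       (a ≠ b → ∃ (e0 : H.E) (ψ : H.E → G.E),
          Sym2.map φ (H.ends e0) = s(a, b) ∧
          Set.InjOn ψ {e : H.E | e ≠ e0} ∧
          ψ '' {e : H.E | e ≠ e0} = {e : G.E | e ∉ ({euv, euw, evw, eua, evb} : Set G.E)} ∧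
          ∀ e, e ≠ e0 → G.ends (ψ e) = Sym2.map φ (H.ends e)))

/-- `(S, F)` is a triangle (a `K3` subgraph) of `G`. -/
def IsTriangleSub (G : Multigraph) (S : Set G.V) (F : Set G.E) : Prop :=
  ∃ (x y z : G.V) (e1 e2 e3 : G.E),
    x ≠ y ∧ x ≠ z ∧ y ≠ z ∧
    G.ends e1 = s(x, y) ∧ G.ends e2 = s(y, z) ∧ G.ends e3 = s(x, z) ∧
    S = {x, y, z} ∧ F = {e1, e2, e3}

/-- The subgraph `(S, F)` of `G` is `Z3`-connected (as a graph in its own right). -/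
def SubZ3Connected (G : Multigraph) (S : Set G.V) (F : Set G.E) : Prop :=
  ∀ β : G.V → ZMod 3, (∀ v, v ∉ S → β v = 0) → (∑ v : G.V, β v) = 0 →
    ∃ D : G.E → G.V × G.V, G.IsOrientation D ∧
      ∀ v ∈ S, (({e : G.E | e ∈ F ∧ (D e).1 = v}.ncard : ZMod 3)
        - ({e : G.E | e ∈ F ∧ (D e).2 = v}.ncard : ZMod 3)) = β v

/-- `G` is the 2-sum of its subgraphs `(SA, FA)` and `(SB, FB)`:
`E(G) = E(A) ∪ E(B)`, `|E(A) ∩ E(B)| = 1` and `|V(A) ∩ V(B)| = 2`. -/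
def IsTwoSum (G : Multigraph) (SA : Set G.V) (FA : Set G.E)
    (SB : Set G.V) (FB : Set G.E) : Prop :=
  G.Subgraph SA FA ∧ G.Subgraph SB FB ∧
  FA ∪ FB = Set.univ ∧ (FA ∩ FB).ncard = 1 ∧ (SA ∩ SB).ncard = 2

/-- All vertices of `G` are joined by walks using only edges from `F`. -/
def ConnOn (G : Multigraph) (F : Set G.E) : Prop :=
  ∀ u v : G.V, Relation.ReflTransGen (fun x y => ∃ e ∈ F, G.ends e = s(x, y)) u v

/-- The spanning subgraph with edge set `F` is 2-edge-connected:
connected and with no cut edge. -/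
def TwoEdgeConnOn (G : Multigraph) (F : Set G.E) : Prop :=
  G.ConnOn F ∧ ∀ e ∈ F, G.ConnOn (F \ {e})

/-- The orientation `D` is strongly connected. -/
def StronglyConnected (G : Multigraph) (D : G.E → G.V × G.V) : Prop :=
  ∀ u v : G.V, Relation.ReflTransGen (fun x y => ∃ e : G.E, D e = (x, y)) u v

/-- `G` belongs to the class `S3`: every `Z3`-boundary is realized by a strongly
connected orientation. -/
def InS3 (G : Multigraph) : Prop :=
  ∀ β : G.V → ZMod 3, (∑ v : G.V, β v) = 0 →
    ∃ D : G.E → G.V × G.V, G.IsOrientation D ∧ G.StronglyConnected D ∧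
      ∀ v : G.V, ((G.outDeg D v : ZMod 3) - (G.inDeg D v : ZMod 3)) = β v

/-- `G` has a cycle (of length ≥ 2, so possibly a pair of parallel edges) all of whose
edges lie in `A`. -/
def HasCycleIn (G : Multigraph) (A : Set G.E) : Prop :=
  ∃ (vs : List G.V) (es : List G.E),
    2 ≤ vs.length ∧ vs.Nodup ∧ es.Nodup ∧ es.length = vs.length ∧
    (∀ e ∈ es, e ∈ A) ∧
    ∀ (i : ℕ) (h1 : i < es.length) (h2 : i < vs.length)
      (h3 : (i + 1) % vs.length < vs.length),
      G.ends (es.get ⟨i, h1⟩) = s(vs.get ⟨i, h2⟩, vs.get ⟨(i + 1) % vs.length, h3⟩)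

/-- `(vs, es)` is a path from `u` to `v` in `G`. -/
def IsPath (G : Multigraph) (u v : G.V) (vs : List G.V) (es : List G.E) : Prop :=
  vs.Nodup ∧ es.Nodup ∧ vs.head? = some u ∧ vs.getLast? = some v ∧
  vs.length = es.length + 1 ∧
  ∀ (i : ℕ) (h1 : i < es.length) (h2 : i < vs.length) (h3 : i + 1 < vs.length),
    G.ends (es.get ⟨i, h1⟩) = s(vs.get ⟨i, h2⟩, vs.get ⟨i + 1, h3⟩)

/-- `H` is isomorphic to the subgraph `(S, F)` of `G`. -/
def IsIsoToSub (H G : Multigraph) (S : Set G.V) (F : Set G.E) : Prop :=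
  ∃ (φ : H.V → G.V) (ψ : H.E → G.E),
    Function.Injective φ ∧ Set.range φ = S ∧
    Function.Injective ψ ∧ Set.range ψ = F ∧
    ∀ e, G.ends (ψ e) = Sym2.map φ (H.ends e)

/-- `G'` is (isomorphic to) the graph obtained from `G` by adding two new edges with
endpoint pairs `p` and `q`. -/
def IsAddTwoEdges (G : Multigraph) (p q : Sym2 G.V) (G' : Multigraph) : Prop :=
  ∃ (φ : G.V ≃ G'.V) (e1 e2 : G'.E), e1 ≠ e2 ∧
    G'.ends e1 = Sym2.map (⇑φ) p ∧ G'.ends e2 = Sym2.map (⇑φ) q ∧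
    ∃ ψ : G.E → G'.E, Function.Injective ψ ∧
      Set.range ψ = {e : G'.E | e ≠ e1 ∧ e ≠ e2} ∧
      ∀ e, G'.ends (ψ e) = Sym2.map (⇑φ) (G.ends e)

/-- `G'` is (isomorphic to) the graph obtained from `G` by deleting the edges in `X`
and adding one new edge with endpoint pair `p`. -/
def IsDeleteAddEdge (G : Multigraph) (X : Set G.E) (p : Sym2 G.V) (G' : Multigraph) : Prop :=
  ∃ (φ : G.V ≃ G'.V) (e0 : G'.E),
    G'.ends e0 = Sym2.map (⇑φ) p ∧
    ∃ ψ : {e : G.E // e ∉ X} → G'.E, Function.Injective ψ ∧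
      Set.range ψ = {e : G'.E | e ≠ e0} ∧
      ∀ e : {e : G.E // e ∉ X}, G'.ends (ψ e) = Sym2.map (⇑φ) (G.ends e.1)

/-- `G` is a crystal: a spanning triangle-path plus one extra edge joining its two
leaves. -/
def IsCrystal (G : Multigraph) : Prop :=
  ∃ (F : Set G.E) (u v : G.V) (e0 : G.E),
    G.IsTrianglePath Set.univ F ∧ u ≠ v ∧
    G.degIn F u = 2 ∧ G.degIn F v = 2 ∧
    e0 ∉ F ∧ G.ends e0 = s(u, v) ∧ insert e0 F = Set.univ

/-- The subgraph with edge set `F` is triangularly connected: any two of its edges lie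
on a common triangle-path inside it. -/
def TriangularlyConnectedOn (G : Multigraph) (F : Set G.E) : Prop :=
  ∀ e1 ∈ F, ∀ e2 ∈ F, ∃ (S : Set G.V) (F' : Set G.E),
    F' ⊆ F ∧ G.IsTrianglePath S F' ∧ e1 ∈ F' ∧ e2 ∈ F'

/-- `G` is triangularly connected. -/
def TriangularlyConnected (G : Multigraph) : Prop :=
  G.TriangularlyConnectedOn Set.univ

/-- `G` contains a spanning triangularly-connected subgraph. -/
def HasSpanningTriangularlyConnected (G : Multigraph) : Prop :=
  ∃ F : Set G.E, G.TriangularlyConnectedOn F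

/-- `G` admits a circular `t/s`-flow. -/
def HasCircularFlow (G : Multigraph) (t s : ℤ) : Prop :=
  ∃ (D : G.E → G.V × G.V) (f : G.E → ℤ),
    G.IsOrientation D ∧ (∀ e, s ≤ |f e| ∧ |f e| ≤ t - s) ∧ G.IsConserving D f

end Multigraph

/-- `G` can be obtained from `K4` by a (possibly empty) series of bull-growing
operations. -/
inductive FromK4ByBull : Multigraph → Prop
  | base (G : Multigraph) : G.IsK4 → FromK4ByBull G
  | grow (G H : Multigraph) : FromK4ByBull H → G.IsBullGrowing H → FromK4ByBull G

namespace TTProof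

open Multigraph Relation

variable (G : Multigraph)

/-- The walk-step relation used in `ConnOn`. -/
def rel (F : Set G.E) (x y : G.V) : Prop := ∃ e ∈ F, G.ends e = s(x, y)

lemma rel_symm {F : Set G.E} : Symmetric (rel G F) := by
  rintro x y ⟨e, he, h⟩; exact ⟨e, he, by rw [h, Sym2.eq_swap]⟩

lemma rel_mono {F F' : Set G.E} (h : F ⊆ F') {x y} : rel G F x y → rel G F' x y := by
  rintro ⟨e, he, hE⟩; exact ⟨e, h he, hE⟩

lemma rtg_rel_symm {F : Set G.E} {x y} (h : ReflTransGen (rel G F) x y) :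
    ReflTransGen (rel G F) y x := by
  haveI : Std.Symm (rel G F) := ⟨fun _ _ h => rel_symm G h⟩
  exact Std.Symm.symm _ _ h

/-- Connectivity of `S` via edges in `F`. -/
def Conn (S : Set G.V) (F : Set G.E) : Prop :=
  ∀ u ∈ S, ∀ w ∈ S, ReflTransGen (rel G F) u w

lemma Conn.mono {S : Set G.V} {F F' : Set G.E} (h : F ⊆ F') (hc : Conn G S F) :
    Conn G S F' :=
  fun u hu w hw => ReflTransGen.mono (r := rel G F) (p := rel G F') (fun _ _ => rel_mono G h) u w (hc u hu w hw)

lemma conn_insert_vertex {S : Set G.V} {C : Set G.E} {v a : G.V} {f0 : G.E}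
    (ha : a ∈ S) (hf0 : f0 ∈ C) (hends : G.ends f0 = s(v, a))
    (hconn : Conn G S C) : Conn G (insert v S) C := by
  have hva : ReflTransGen (rel G C) v a := ReflTransGen.single ⟨f0, hf0, hends⟩
  intro u hu w hw
  rcases hu with rfl | hu
  · rcases hw with rfl | hw
    · exact ReflTransGen.refl
    · exact hva.trans (hconn a ha w hw)
  · rcases hw with rfl | hw
    · exact (hconn u hu a ha).trans (rtg_rel_symm G hva)
    · exact hconn u hu w hw

lemma rtg_lift {α} {r s : α → α → Prop} (h : ∀ x y, r x y → ReflTransGen s x y)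
    {u v : α} (huv : ReflTransGen r u v) : ReflTransGen s u v := by
  induction huv with
  | refl => exact ReflTransGen.refl
  | tail _ hstep ih => exact ih.trans (h _ _ hstep)

lemma lift_subdiv {C C' : Set G.E} {e e1 e2 : G.E} {a b v : G.V}
    (hab : G.ends e = s(a, b)) (h1 : G.ends e1 = s(v, a)) (h2 : G.ends e2 = s(v, b))
    (hsub : ∀ f ∈ C, f ≠ e → f ∈ C') (he1 : e1 ∈ C') (he2 : e2 ∈ C')
    {x y} (hxy : rel G C x y) : ReflTransGen (rel G C') x y := by
  obtain ⟨f, hf, hfe⟩ := hxy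
  by_cases hfeq : f = e
  · subst hfeq
    rw [hab] at hfe
    rcases Sym2.eq_iff.mp hfe with ⟨rfl, rfl⟩ | ⟨rfl, rfl⟩
    · exact ReflTransGen.head ⟨e1, he1, by rw [h1, Sym2.eq_swap]⟩
        (ReflTransGen.single ⟨e2, he2, h2⟩)
    · exact ReflTransGen.head ⟨e2, he2, by rw [h2, Sym2.eq_swap]⟩
        (ReflTransGen.single ⟨e1, he1, h1⟩)
  · exact ReflTransGen.single ⟨f, hsub f hf hfeq, hfe⟩

lemma degIn_mono {F1 F2 : Set G.E} (h : F1 ⊆ F2) (w : G.V) :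
    G.degIn F1 w ≤ G.degIn F2 w :=
  Set.ncard_le_ncard (fun e he => ⟨h he.1, he.2⟩) (Set.toFinite _)

lemma two_le_degIn {F : Set G.E} {w : G.V} {f g : G.E} (hfg : f ≠ g)
    (hf : f ∈ F) (hg : g ∈ F) (hwf : w ∈ G.ends f) (hwg : w ∈ G.ends g) :
    2 ≤ G.degIn F w := by
  have hsub : ({f, g} : Set G.E) ⊆ {e | e ∈ F ∧ w ∈ G.ends e} := by
    rintro x (rfl | rfl)
    · exact ⟨hf, hwf⟩
    · exact ⟨hg, hwg⟩
  calc 2 = ({f, g} : Set G.E).ncard := (Set.ncard_pair hfg).symm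
    _ ≤ _ := Set.ncard_le_ncard hsub (Set.toFinite _)

lemma degIn_insert_of_not_mem {F : Set G.E} {f : G.E} {w : G.V}
    (hfF : f ∉ F) (hw : w ∈ G.ends f) :
    G.degIn (insert f F) w = G.degIn F w + 1 := by
  have hset : {e | e ∈ insert f F ∧ w ∈ G.ends e} = insert f {e | e ∈ F ∧ w ∈ G.ends e} := by
    ext g
    simp only [Set.mem_insert_iff, Set.mem_setOf_eq]
    constructor
    · rintro ⟨rfl | hg, hw'⟩
      · exact Or.inl rfl
      · exact Or.inr ⟨hg, hw'⟩
    · rintro (rfl | ⟨hg, hw'⟩)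
      · exact ⟨Or.inl rfl, hw⟩
      · exact ⟨Or.inr hg, hw'⟩
  rw [Multigraph.degIn, hset, Set.ncard_insert_of_notMem (fun h => hfF h.1) (Set.toFinite _)]
  rfl

lemma degIn_insert_of_not_mem_ends {F : Set G.E} {f : G.E} {w : G.V}
    (hw : w ∉ G.ends f) :
    G.degIn (insert f F) w = G.degIn F w := by
  have hset : {e | e ∈ insert f F ∧ w ∈ G.ends e} = {e | e ∈ F ∧ w ∈ G.ends e} := by
    ext g
    simp only [Set.mem_insert_iff, Set.mem_setOf_eq]
    constructor
    · rintro ⟨rfl | hg, hw'⟩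
      · exact absurd hw' hw
      · exact ⟨hg, hw'⟩
    · rintro ⟨hg, hw'⟩
      exact ⟨Or.inr hg, hw'⟩
  rw [Multigraph.degIn, hset]
  rfl

end TTProof
namespace TTProof

open Multigraph Relation

variable (G : Multigraph)

lemma base_edges_ne {x y z : G.V} {f1 f2 f3 : G.E}
    (hxy : x ≠ y) (hxz : x ≠ z) (hyz : y ≠ z)
    (h1 : G.ends f1 = s(x, y)) (h2 : G.ends f2 = s(y, z)) (h3 : G.ends f3 = s(x, z)) :
    f1 ≠ f2 ∧ f1 ≠ f3 ∧ f2 ≠ f3 := by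
  refine ⟨fun h => ?_, fun h => ?_, fun h => ?_⟩
  · rw [h, h2] at h1
    rcases Sym2.eq_iff.mp h1 with ⟨h', h''⟩ | ⟨h', h''⟩
    · exact hxy h'.symm
    · exact hxz h''.symm
  · rw [h, h3] at h1
    rcases Sym2.eq_iff.mp h1 with ⟨h', h''⟩ | ⟨h', h''⟩
    · exact hyz h''.symm
    · exact hxy h'
  · rw [h, h3] at h2
    rcases Sym2.eq_iff.mp h2 with ⟨h', h''⟩ | ⟨h', h''⟩
    · exact hxy h'
    · exact hxz h'

lemma base_degIn {x y z : G.V} {f1 f2 f3 : G.E}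
    (hxy : x ≠ y) (hxz : x ≠ z) (hyz : y ≠ z)
    (h1 : G.ends f1 = s(x, y)) (h2 : G.ends f2 = s(y, z)) (h3 : G.ends f3 = s(x, z)) :
    ∀ w ∈ ({x, y, z} : Set G.V), G.degIn {f1, f2, f3} w = 2 := by
  obtain ⟨h12, h13, h23⟩ := base_edges_ne G hxy hxz hyz h1 h2 h3
  intro w hw
  rcases hw with rfl | rfl | rfl
  · have hset : {e | e ∈ ({f1, f2, f3} : Set G.E) ∧ w ∈ G.ends e} = {f1, f3} := by
      ext g
      simp only [Set.mem_insert_iff, Set.mem_singleton_iff, Set.mem_setOf_eq]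
      constructor
      · rintro ⟨rfl | rfl | rfl, hw'⟩
        · exact Or.inl rfl
        · rw [h2, Sym2.mem_iff] at hw'
          rcases hw' with rfl | rfl
          · exact absurd rfl hxy
          · exact absurd rfl hxz
        · exact Or.inr rfl
      · rintro (rfl | rfl)
        · exact ⟨Or.inl rfl, by rw [h1]; exact Sym2.mem_mk_left _ _⟩
        · exact ⟨Or.inr (Or.inr rfl), by rw [h3]; exact Sym2.mem_mk_left _ _⟩
    rw [Multigraph.degIn, hset]
    exact Set.ncard_pair h13
  · have hset : {e | e ∈ ({f1, f2, f3} : Set G.E) ∧ w ∈ G.ends e} = {f1, f2} := by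
      ext g
      simp only [Set.mem_insert_iff, Set.mem_singleton_iff, Set.mem_setOf_eq]
      constructor
      · rintro ⟨rfl | rfl | rfl, hw'⟩
        · exact Or.inl rfl
        · exact Or.inr rfl
        · rw [h3, Sym2.mem_iff] at hw'
          rcases hw' with rfl | rfl
          · exact absurd rfl hxy
          · exact absurd rfl hyz
      · rintro (rfl | rfl)
        · exact ⟨Or.inl rfl, by rw [h1]; exact Sym2.mem_mk_right _ _⟩
        · exact ⟨Or.inr (Or.inl rfl), by rw [h2]; exact Sym2.mem_mk_left _ _⟩
    rw [Multigraph.degIn, hset]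
    exact Set.ncard_pair h12
  · have hset : {e | e ∈ ({f1, f2, f3} : Set G.E) ∧ w ∈ G.ends e} = {f2, f3} := by
      ext g
      simp only [Set.mem_insert_iff, Set.mem_singleton_iff, Set.mem_setOf_eq]
      constructor
      · rintro ⟨rfl | rfl | rfl, hw'⟩
        · rw [h1, Sym2.mem_iff] at hw'
          rcases hw' with rfl | rfl
          · exact absurd rfl hxz
          · exact absurd rfl hyz
        · exact Or.inl rfl
        · exact Or.inr rfl
      · rintro (rfl | rfl)
        · exact ⟨Or.inr (Or.inl rfl), by rw [h2]; exact Sym2.mem_mk_right _ _⟩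
        · exact ⟨Or.inr (Or.inr rfl), by rw [h3]; exact Sym2.mem_mk_right _ _⟩
    rw [Multigraph.degIn, hset]
    exact Set.ncard_pair h23

lemma tt_subgraph {S : Set G.V} {F : Set G.E} (h : G.IsTriangleTree S F) :
    ∀ e ∈ F, ∀ w ∈ G.ends e, w ∈ S := by
  induction h with
  | base x y z f1 f2 f3 hxy hxz hyz h1 h2 h3 =>
    intro e he w hw
    rcases he with rfl | rfl | rfl
    · rw [h1, Sym2.mem_iff] at hw
      rcases hw with rfl | rfl
      · exact Or.inl rfl
      · exact Or.inr (Or.inl rfl)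
    · rw [h2, Sym2.mem_iff] at hw
      rcases hw with rfl | rfl
      · exact Or.inr (Or.inl rfl)
      · exact Or.inr (Or.inr rfl)
    · rw [h3, Sym2.mem_iff] at hw
      rcases hw with rfl | rfl
      · exact Or.inl rfl
      · exact Or.inr (Or.inr rfl)
  | grow S F hT v a b hv e he hab e1 e2 h1 h2 ih =>
    have haS : a ∈ S := ih e he a (by rw [hab]; exact Sym2.mem_mk_left _ _)
    have hbS : b ∈ S := ih e he b (by rw [hab]; exact Sym2.mem_mk_right _ _)
    intro f hf w hw
    rcases hf with rfl | rfl | hf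
    · rw [h1, Sym2.mem_iff] at hw
      rcases hw with rfl | rfl
      · exact Or.inl rfl
      · exact Or.inr haS
    · rw [h2, Sym2.mem_iff] at hw
      rcases hw with rfl | rfl
      · exact Or.inl rfl
      · exact Or.inr hbS
    · exact Or.inr (ih f hf w hw)

lemma tt_two_edges {S : Set G.V} {F : Set G.E} (h : G.IsTriangleTree S F) :
    ∀ w ∈ S, ∃ p q : G.E, p ≠ q ∧ p ∈ F ∧ q ∈ F ∧ w ∈ G.ends p ∧ w ∈ G.ends q := by
  induction h with
  | base x y z f1 f2 f3 hxy hxz hyz h1 h2 h3 =>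
    obtain ⟨h12, h13, h23⟩ := base_edges_ne G hxy hxz hyz h1 h2 h3
    intro w hw
    rcases hw with rfl | rfl | rfl
    · exact ⟨f1, f3, h13, Or.inl rfl, Or.inr (Or.inr rfl),
        by rw [h1]; exact Sym2.mem_mk_left _ _, by rw [h3]; exact Sym2.mem_mk_left _ _⟩
    · exact ⟨f1, f2, h12, Or.inl rfl, Or.inr (Or.inl rfl),
        by rw [h1]; exact Sym2.mem_mk_right _ _, by rw [h2]; exact Sym2.mem_mk_left _ _⟩
    · exact ⟨f2, f3, h23, Or.inr (Or.inl rfl), Or.inr (Or.inr rfl),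
        by rw [h2]; exact Sym2.mem_mk_right _ _, by rw [h3]; exact Sym2.mem_mk_right _ _⟩
  | grow S F hT v a b hv e he hab e1 e2 h1 h2 ih =>
    have hne : e1 ≠ e2 := by
      intro hcon
      have hab' : a ≠ b := by
        intro hcon2
        exact G.loopless e (by rw [hab, hcon2]; exact Sym2.mk_isDiag_iff.mpr rfl)
      rw [hcon, h2] at h1
      rcases Sym2.eq_iff.mp h1 with ⟨_, h''⟩ | ⟨h', h''⟩
      · exact hab' h''.symm
      · exact hab' (h'.symm.trans h''.symm)
    intro w hw
    rcases hw with rfl | hw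
    · exact ⟨e1, e2, hne, Or.inl rfl, Or.inr (Or.inl rfl),
        by rw [h1]; exact Sym2.mem_mk_left _ _, by rw [h2]; exact Sym2.mem_mk_left _ _⟩
    · obtain ⟨p, q, hpq, hp, hq, hwp, hwq⟩ := ih w hw
      exact ⟨p, q, hpq, Or.inr (Or.inr hp), Or.inr (Or.inr hq), hwp, hwq⟩

end TTProof
namespace TTProof

open Multigraph Relation

variable (G : Multigraph)

lemma grow_facts {S : Set G.V} {F : Set G.E} (hT : G.IsTriangleTree S F)
    {v a b : G.V} (hv : v ∉ S) {e e1 e2 : G.E} (he : e ∈ F)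
    (hab : G.ends e = s(a, b)) (h1 : G.ends e1 = s(v, a)) (h2 : G.ends e2 = s(v, b)) :
    a ∈ S ∧ b ∈ S ∧ a ≠ b ∧ e1 ∉ F ∧ e2 ∉ F ∧ e1 ≠ e2 ∧ e ≠ e1 ∧ e ≠ e2 := by
  have haS : a ∈ S := tt_subgraph G hT e he a (by rw [hab]; exact Sym2.mem_mk_left _ _)
  have hbS : b ∈ S := tt_subgraph G hT e he b (by rw [hab]; exact Sym2.mem_mk_right _ _)
  have hab' : a ≠ b := fun hcon =>
    G.loopless e (by rw [hab, hcon]; exact Sym2.mk_isDiag_iff.mpr rfl)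
  have he1F : e1 ∉ F := fun hcon =>
    hv (tt_subgraph G hT e1 hcon v (by rw [h1]; exact Sym2.mem_mk_left _ _))
  have he2F : e2 ∉ F := fun hcon =>
    hv (tt_subgraph G hT e2 hcon v (by rw [h2]; exact Sym2.mem_mk_left _ _))
  have h12 : e1 ≠ e2 := by
    intro hcon
    rw [hcon, h2] at h1
    rcases Sym2.eq_iff.mp h1 with ⟨_, h''⟩ | ⟨h', h''⟩
    · exact hab' h''.symm
    · exact hab' (h'.symm.trans h''.symm)
  exact ⟨haS, hbS, hab', he1F, he2F, h12, fun hc => he1F (hc ▸ he), fun hc => he2F (hc ▸ he)⟩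

lemma grow_deg {S : Set G.V} {F : Set G.E} (hT : G.IsTriangleTree S F)
    {v a b : G.V} (hv : v ∉ S) {e e1 e2 : G.E} (he : e ∈ F)
    (hab : G.ends e = s(a, b)) (h1 : G.ends e1 = s(v, a)) (h2 : G.ends e2 = s(v, b)) :
    G.degIn (insert e1 (insert e2 F)) v = 2 ∧
    3 ≤ G.degIn (insert e1 (insert e2 F)) a ∧
    3 ≤ G.degIn (insert e1 (insert e2 F)) b ∧
    (∀ w ∈ S, w ≠ a → w ≠ b → G.degIn (insert e1 (insert e2 F)) w = G.degIn F w) := by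
  obtain ⟨haS, hbS, hab', he1F, he2F, h12, -, -⟩ :=
    grow_facts G hT hv he hab h1 h2
  have hvnot : ∀ f ∈ F, v ∉ G.ends f := fun f hf hcon => hv (tt_subgraph G hT f hf v hcon)
  have hva : v ≠ a := fun hc => hv (hc ▸ haS)
  have hvb : v ≠ b := fun hc => hv (hc ▸ hbS)
  refine ⟨?_, ?_, ?_, ?_⟩
  · have hset : {g | g ∈ insert e1 (insert e2 F) ∧ v ∈ G.ends g} = {e1, e2} := by
      ext g
      simp only [Set.mem_insert_iff, Set.mem_setOf_eq, Set.mem_singleton_iff]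
      constructor
      · rintro ⟨rfl | rfl | hg, hw'⟩
        · exact Or.inl rfl
        · exact Or.inr rfl
        · exact absurd hw' (hvnot g hg)
      · rintro (rfl | rfl)
        · exact ⟨Or.inl rfl, by rw [h1]; exact Sym2.mem_mk_left _ _⟩
        · exact ⟨Or.inr (Or.inl rfl), by rw [h2]; exact Sym2.mem_mk_left _ _⟩
    rw [Multigraph.degIn, hset]
    exact Set.ncard_pair h12
  · have hstep : G.degIn (insert e2 F) a = G.degIn F a :=
      degIn_insert_of_not_mem_ends G (by
        rw [h2, Sym2.mem_iff]
        rintro (rfl | rfl)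
        · exact hva rfl
        · exact hab' rfl)
    have h2le : 2 ≤ G.degIn F a := by
      obtain ⟨p, q, hpq, hp, hq, hwp, hwq⟩ := tt_two_edges G hT a haS
      exact two_le_degIn G hpq hp hq hwp hwq
    have : G.degIn (insert e1 (insert e2 F)) a = G.degIn (insert e2 F) a + 1 :=
      degIn_insert_of_not_mem G (by
        simp only [Set.mem_insert_iff]
        rintro (rfl | hc)
        · exact h12 rfl
        · exact he1F hc)
        (by rw [h1]; exact Sym2.mem_mk_right _ _)
    omega
  · have hstep : G.degIn (insert e2 F) b = G.degIn F b + 1 :=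
      degIn_insert_of_not_mem G he2F (by rw [h2]; exact Sym2.mem_mk_right _ _)
    have h2le : 2 ≤ G.degIn F b := by
      obtain ⟨p, q, hpq, hp, hq, hwp, hwq⟩ := tt_two_edges G hT b hbS
      exact two_le_degIn G hpq hp hq hwp hwq
    have : G.degIn (insert e1 (insert e2 F)) b = G.degIn (insert e2 F) b :=
      degIn_insert_of_not_mem_ends G (by
        rw [h1, Sym2.mem_iff]
        rintro (rfl | rfl)
        · exact hvb rfl
        · exact hab' rfl)
    omega
  · intro w hw hwa hwb
    have hwv : w ≠ v := fun hc => hv (hc ▸ hw)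
    have s1 : G.degIn (insert e1 (insert e2 F)) w = G.degIn (insert e2 F) w :=
      degIn_insert_of_not_mem_ends G (by
        rw [h1, Sym2.mem_iff]
        rintro (rfl | rfl)
        · exact hwv rfl
        · exact hwa rfl)
    have s2 : G.degIn (insert e2 F) w = G.degIn F w :=
      degIn_insert_of_not_mem_ends G (by
        rw [h2, Sym2.mem_iff]
        rintro (rfl | rfl)
        · exact hwv rfl
        · exact hwb rfl)
    rw [s1, s2]

lemma base_ncard {x y z : G.V} (hxy : x ≠ y) (hxz : x ≠ z) (hyz : y ≠ z) :
    ({x, y, z} : Set G.V).ncard = 3 := by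
  rw [Set.ncard_insert_of_notMem (by
    simp only [Set.mem_insert_iff, Set.mem_singleton_iff]
    rintro (rfl | rfl)
    · exact hxy rfl
    · exact hxz rfl) (Set.toFinite _), Set.ncard_pair hyz]

lemma tt_three_le_ncard {S : Set G.V} {F : Set G.E} (h : G.IsTriangleTree S F) :
    3 ≤ S.ncard := by
  induction h with
  | base x y z f1 f2 f3 hxy hxz hyz h1 h2 h3 => rw [base_ncard G hxy hxz hyz]
  | grow S F hT v a b hv e he hab e1 e2 h1 h2 ih =>
    rw [Set.ncard_insert_of_notMem hv (Set.toFinite _)]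
    omega

lemma tt_ncard3_leaves {S : Set G.V} {F : Set G.E} (h : G.IsTriangleTree S F)
    (h3 : S.ncard = 3) : ∀ w ∈ S, G.degIn F w = 2 := by
  cases h with
  | base x y z f1 f2 f3 hxy hxz hyz h1 h2 h3' => exact base_degIn G hxy hxz hyz h1 h2 h3'
  | grow S F hT v a b hv e he hab e1 e2 h1 h2 =>
    have := tt_three_le_ncard G hT
    rw [Set.ncard_insert_of_notMem hv (Set.toFinite _)] at h3
    omega

lemma tt_adj_leaves {S : Set G.V} {F : Set G.E} (h : G.IsTriangleTree S F) :
    ∀ f ∈ F, ∀ x y : G.V, G.ends f = s(x, y) →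
      G.degIn F x = 2 → G.degIn F y = 2 → S.ncard = 3 := by
  induction h with
  | base x y z f1 f2 f3 hxy hxz hyz h1 h2 h3 =>
    intro _ _ _ _ _ _ _
    exact base_ncard G hxy hxz hyz
  | grow S F hT v a b hv e he hab e1 e2 h1 h2 ih =>
    intro f hf x y hfxy hdx hdy
    exfalso
    obtain ⟨haS, hbS, hab', he1F, he2F, h12, he1, he2⟩ := grow_facts G hT hv he hab h1 h2
    obtain ⟨hdv, hda, hdb, hdw⟩ := grow_deg G hT hv he hab h1 h2
    have hxy' : x ≠ y := fun hc => G.loopless f (by rw [hfxy, hc]; exact Sym2.mk_isDiag_iff.mpr rfl)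
    rcases hf with rfl | rfl | hf
    · rw [h1] at hfxy
      rcases Sym2.eq_iff.mp hfxy with ⟨-, hA⟩ | ⟨-, hA⟩
      · rw [← hA] at hdy; omega
      · rw [← hA] at hdx; omega
    · rw [h2] at hfxy
      rcases Sym2.eq_iff.mp hfxy with ⟨-, hA⟩ | ⟨-, hA⟩
      · rw [← hA] at hdy; omega
      · rw [← hA] at hdx; omega
    · have hxS : x ∈ S := tt_subgraph G hT f hf x (by rw [hfxy]; exact Sym2.mem_mk_left _ _)
      have hyS : y ∈ S := tt_subgraph G hT f hf y (by rw [hfxy]; exact Sym2.mem_mk_right _ _)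
      by_cases hxa : x = a
      · rw [hxa] at hdx; omega
      by_cases hxb : x = b
      · rw [hxb] at hdx; omega
      by_cases hya : y = a
      · rw [hya] at hdy; omega
      by_cases hyb : y = b
      · rw [hyb] at hdy; omega
      -- now x, y ∉ {a, b}; degrees in F equal new degrees
      have hdx' : G.degIn F x = 2 := by rw [← hdw x hxS hxa hxb]; exact hdx
      have hdy' : G.degIn F y = 2 := by rw [← hdw y hyS hya hyb]; exact hdy
      have hS3 : S.ncard = 3 := ih f hf x y hfxy hdx' hdy'
      -- but then {x, y, a, b} are four distinct elements of S
      have hsub : ({x, y, a, b} : Set G.V) ⊆ S := by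
        rintro w (rfl | rfl | rfl | rfl)
        · exact hxS
        · exact hyS
        · exact haS
        · exact hbS
      have hc4 : ({x, y, a, b} : Set G.V).ncard = 4 := by
        rw [Set.ncard_insert_of_notMem (by
              simp only [Set.mem_insert_iff, Set.mem_singleton_iff]
              rintro (rfl | rfl | rfl)
              · exact hxy' rfl
              · exact hxa rfl
              · exact hxb rfl) (Set.toFinite _),
            Set.ncard_insert_of_notMem (by
              simp only [Set.mem_insert_iff, Set.mem_singleton_iff]
              rintro (rfl | rfl)
              · exact hya rfl
              · exact hyb rfl) (Set.toFinite _),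
            Set.ncard_pair hab']
      have := Set.ncard_le_ncard hsub (Set.toFinite _)
      omega

end TTProof
namespace TTProof

open Multigraph Relation

variable (G : Multigraph)

lemma conn_triple {S : Set G.V} {C : Set G.E} {x y z : G.V} (hS : S = {x, y, z})
    (hxy : ReflTransGen (rel G C) x y) (hyz : ReflTransGen (rel G C) y z) :
    Conn G S C := by
  subst hS
  have hyx := rtg_rel_symm G hxy
  have hzy := rtg_rel_symm G hyz
  have hxz := hxy.trans hyz
  have hzx := rtg_rel_symm G hxz
  intro u hu w hw
  rcases hu with rfl | rfl | rfl <;> rcases hw with rfl | rfl | rfl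
  · exact ReflTransGen.refl
  · exact hxy
  · exact hxz
  · exact hyx
  · exact ReflTransGen.refl
  · exact hyz
  · exact hzx
  · exact hzy
  · exact ReflTransGen.refl

lemma main {S : Set G.V} {F : Set G.E} (h : G.IsTriangleTree S F) :
    ∃ X ⊆ F,
      S.ncard - {w ∈ S | G.degIn F w = 2}.ncard - 1 ≤ X.ncard ∧
      Conn G S (F \ X) ∧
      (∀ f ∈ F \ X, Conn G S ((F \ X) \ {f})) ∧
      (∀ w ∈ S, ∃ p q : G.E, p ≠ q ∧ p ∈ F \ X ∧ q ∈ F \ X ∧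
        w ∈ G.ends p ∧ w ∈ G.ends q) := by
  induction h with
  | base x y z f1 f2 f3 hxy hxz hyz h1 h2 h3 =>
    obtain ⟨h12, h13, h23⟩ := base_edges_ne G hxy hxz hyz h1 h2 h3
    have hTb : G.IsTriangleTree {x, y, z} {f1, f2, f3} :=
      Multigraph.IsTriangleTree.base x y z f1 f2 f3 hxy hxz hyz h1 h2 h3
    refine ⟨∅, Set.empty_subset _, ?_, ?_, ?_, ?_⟩
    · have hL : {w ∈ ({x, y, z} : Set G.V) | G.degIn {f1, f2, f3} w = 2}
          = ({x, y, z} : Set G.V) := by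
        ext w
        simp only [Set.mem_setOf_eq]
        exact ⟨fun hw => hw.1, fun hw => ⟨hw, base_degIn G hxy hxz hyz h1 h2 h3 w hw⟩⟩
      rw [hL]
      omega
    · rw [Set.diff_empty]
      exact conn_triple G rfl
        (ReflTransGen.single ⟨f1, Or.inl rfl, h1⟩)
        (ReflTransGen.single ⟨f2, Or.inr (Or.inl rfl), h2⟩)
    · rw [Set.diff_empty]
      intro f hf
      rcases hf with hfe | hfe | hfe <;> rw [hfe]
      · -- remove f1 : x-y; keep f2 : y-z, f3 : x-z
        refine conn_triple G rfl ?_ ?_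
        · exact (ReflTransGen.single ⟨f3, ⟨Or.inr (Or.inr rfl),
              fun hc => h13 (Set.mem_singleton_iff.mp hc).symm⟩, h3⟩).trans
            (ReflTransGen.single ⟨f2, ⟨Or.inr (Or.inl rfl),
              fun hc => h12 (Set.mem_singleton_iff.mp hc).symm⟩, by rw [h2, Sym2.eq_swap]⟩)
        · exact ReflTransGen.single ⟨f2, ⟨Or.inr (Or.inl rfl),
            fun hc => h12 (Set.mem_singleton_iff.mp hc).symm⟩, h2⟩
      · -- remove f2 : y-z; keep f1 : x-y, f3 : x-z
        refine conn_triple G rfl ?_ ?_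
        · exact ReflTransGen.single ⟨f1, ⟨Or.inl rfl,
            fun hc => h12 (Set.mem_singleton_iff.mp hc)⟩, h1⟩
        · exact (ReflTransGen.single ⟨f1, ⟨Or.inl rfl,
              fun hc => h12 (Set.mem_singleton_iff.mp hc)⟩, by rw [h1, Sym2.eq_swap]⟩).trans
            (ReflTransGen.single ⟨f3, ⟨Or.inr (Or.inr rfl),
              fun hc => h23 (Set.mem_singleton_iff.mp hc).symm⟩, h3⟩)
      · -- remove f3 : x-z; keep f1 : x-y, f2 : y-z
        refine conn_triple G rfl ?_ ?_
        · exact ReflTransGen.single ⟨f1, ⟨Or.inl rfl,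
            fun hc => h13 (Set.mem_singleton_iff.mp hc)⟩, h1⟩
        · exact ReflTransGen.single ⟨f2, ⟨Or.inr (Or.inl rfl),
            fun hc => h23 (Set.mem_singleton_iff.mp hc)⟩, h2⟩
    · rw [Set.diff_empty]
      exact tt_two_edges G hTb
  | grow S F hT v a b hv e he hab e1 e2 h1 h2 ih =>
    obtain ⟨X, hXF, hbound, hconn, hcut, htwo⟩ := ih
    obtain ⟨haS, hbS, hab', he1F, he2F, h12, he1, he2⟩ := grow_facts G hT hv he hab h1 h2
    obtain ⟨hdv, hda, hdb, hdw⟩ := grow_deg G hT hv he hab h1 h2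
    have hva : a ∈ G.ends e1 := by rw [h1]; exact Sym2.mem_mk_right _ _
    have hvb : b ∈ G.ends e2 := by rw [h2]; exact Sym2.mem_mk_right _ _
    have hve1 : v ∈ G.ends e1 := by rw [h1]; exact Sym2.mem_mk_left _ _
    have hve2 : v ∈ G.ends e2 := by rw [h2]; exact Sym2.mem_mk_left _ _
    have hae : a ∈ G.ends e := by rw [hab]; exact Sym2.mem_mk_left _ _
    have hbe : b ∈ G.ends e := by rw [hab]; exact Sym2.mem_mk_right _ _
    -- leaves of the new triangle-tree
    have hL' : {w ∈ insert v S | G.degIn (insert e1 (insert e2 F)) w = 2}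
        = insert v ({w ∈ S | G.degIn F w = 2} \ {a, b}) := by
      ext w
      simp only [Set.mem_setOf_eq, Set.mem_insert_iff, Set.mem_diff,
        Set.mem_singleton_iff]
      constructor
      · rintro ⟨rfl | hw, hd⟩
        · exact Or.inl rfl
        · have hwa : w ≠ a := by rintro rfl; omega
          have hwb : w ≠ b := by rintro rfl; omega
          rw [hdw w hw hwa hwb] at hd
          exact Or.inr ⟨⟨hw, hd⟩, by
            rintro (rfl | rfl)
            · exact hwa rfl
            · exact hwb rfl⟩
      · rintro (rfl | ⟨⟨hw, hd⟩, hwab⟩)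
        · exact ⟨Or.inl rfl, hdv⟩
        · have hwa : w ≠ a := fun hc => hwab (Or.inl hc)
          have hwb : w ≠ b := fun hc => hwab (Or.inr hc)
          exact ⟨Or.inr hw, by rw [hdw w hw hwa hwb]; exact hd⟩
    have hnotvL : v ∉ {w ∈ S | G.degIn F w = 2} \ {a, b} := fun hc => hv hc.1.1
    have hcardL' : {w ∈ insert v S | G.degIn (insert e1 (insert e2 F)) w = 2}.ncard
        = ({w ∈ S | G.degIn F w = 2} \ {a, b}).ncard + 1 := by
      rw [hL', Set.ncard_insert_of_notMem hnotvL (Set.toFinite _)]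
    have hcardS' : (insert v S).ncard = S.ncard + 1 :=
      Set.ncard_insert_of_notMem hv (Set.toFinite _)
    by_cases hleaf : G.degIn F a = 2 ∨ G.degIn F b = 2
    · -- construction B : subdivide the base edge `e`
      have heD : e ∈ F \ X := by
        rcases hleaf with h2a | h2b
        · obtain ⟨p, q, hpq, hp, hq, hwp, hwq⟩ := htwo a haS
          have hsub2 : ({p, q} : Set G.E) ⊆ {g | g ∈ F ∧ a ∈ G.ends g} := by
            rintro g (rfl | rfl)
            · exact ⟨hp.1, hwp⟩
            · exact ⟨hq.1, hwq⟩
          have h2a' : {g | g ∈ F ∧ a ∈ G.ends g}.ncard = 2 := h2a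
          have heq : ({p, q} : Set G.E) = {g | g ∈ F ∧ a ∈ G.ends g} :=
            Set.eq_of_subset_of_ncard_le hsub2
              (by rw [Set.ncard_pair hpq, h2a']) (Set.toFinite _)
          have heMem : e ∈ {g | g ∈ F ∧ a ∈ G.ends g} := ⟨he, hae⟩
          rw [← heq] at heMem
          rcases heMem with rfl | rfl
          · exact hp
          · exact hq
        · obtain ⟨p, q, hpq, hp, hq, hwp, hwq⟩ := htwo b hbS
          have hsub2 : ({p, q} : Set G.E) ⊆ {g | g ∈ F ∧ b ∈ G.ends g} := by
            rintro g (rfl | rfl)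
            · exact ⟨hp.1, hwp⟩
            · exact ⟨hq.1, hwq⟩
          have h2b' : {g | g ∈ F ∧ b ∈ G.ends g}.ncard = 2 := h2b
          have heq : ({p, q} : Set G.E) = {g | g ∈ F ∧ b ∈ G.ends g} :=
            Set.eq_of_subset_of_ncard_le hsub2
              (by rw [Set.ncard_pair hpq, h2b']) (Set.toFinite _)
          have heMem : e ∈ {g | g ∈ F ∧ b ∈ G.ends g} := ⟨he, hbe⟩
          rw [← heq] at heMem
          rcases heMem with rfl | rfl
          · exact hp
          · exact hq
      have heX : e ∉ X := heD.2
      have hXcard : (insert e X).ncard = X.ncard + 1 :=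
        Set.ncard_insert_of_notMem heX (Set.toFinite _)
      have hdiffB : (insert e1 (insert e2 F)) \ insert e X
          = insert e1 (insert e2 ((F \ X) \ {e})) := by
        ext g
        simp only [Set.mem_insert_iff, Set.mem_diff, Set.mem_singleton_iff]
        constructor
        · rintro ⟨rfl | rfl | hg, hnot⟩
          · exact Or.inl rfl
          · exact Or.inr (Or.inl rfl)
          · exact Or.inr (Or.inr ⟨⟨hg, fun hc => hnot (Or.inr hc)⟩,
              fun hc => hnot (Or.inl hc)⟩)
        · rintro (rfl | rfl | ⟨⟨hg, hgX⟩, hge⟩)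
          · refine ⟨Or.inl rfl, ?_⟩
            rintro (rfl | hc)
            · exact he1 rfl
            · exact he1F (hXF hc)
          · refine ⟨Or.inr (Or.inl rfl), ?_⟩
            rintro (rfl | hc)
            · exact he2 rfl
            · exact he2F (hXF hc)
          · refine ⟨Or.inr (Or.inr hg), ?_⟩
            rintro (rfl | hc)
            · exact hge rfl
            · exact hgX hc
      refine ⟨insert e X, ?_, ?_, ?_, ?_, ?_⟩
      · rintro g (rfl | hg)
        · exact Or.inr (Or.inr he)
        · exact Or.inr (Or.inr (hXF hg))
      · -- cardinality bound
        by_cases hboth : G.degIn F a = 2 ∧ G.degIn F b = 2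
        · -- both endpoints are leaves: the old tree is a triangle
          have hS3 : S.ncard = 3 := tt_adj_leaves G hT e he a b hab hboth.1 hboth.2
          have habS : ({a, b} : Set G.V) ⊆ S := by
            rintro w (rfl | rfl)
            · exact haS
            · exact hbS
          have hdc : (S \ {a, b}).ncard = 1 := by
            rw [Set.ncard_diff habS (Set.toFinite _), Set.ncard_pair hab', hS3]
          have hpos : 0 < (S \ {a, b}).ncard := by omega
          obtain ⟨c, hcS, hcab⟩ := (Set.ncard_pos (Set.toFinite _)).mp hpos
          have hcL : c ∈ {w ∈ S | G.degIn F w = 2} \ {a, b} :=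
            ⟨⟨hcS, tt_ncard3_leaves G hT hS3 c hcS⟩, hcab⟩
          have hposL : 0 < ({w ∈ S | G.degIn F w = 2} \ {a, b}).ncard :=
            (Set.ncard_pos (Set.toFinite _)).mpr ⟨c, hcL⟩
          omega
        · -- exactly one endpoint is a leaf
          rcases hleaf with h2a | h2b
          · have h2b : ¬ G.degIn F b = 2 := fun hc => hboth ⟨h2a, hc⟩
            have haL : a ∈ {w ∈ S | G.degIn F w = 2} := ⟨haS, h2a⟩
            have hLd : {w ∈ S | G.degIn F w = 2} \ {a, b}
                = {w ∈ S | G.degIn F w = 2} \ {a} := by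
              ext w
              simp only [Set.mem_diff, Set.mem_insert_iff, Set.mem_singleton_iff,
                Set.mem_setOf_eq]
              constructor
              · rintro ⟨hw, hwab⟩
                exact ⟨hw, fun hc => hwab (Or.inl hc)⟩
              · rintro ⟨hw, hwa⟩
                refine ⟨hw, ?_⟩
                rintro (rfl | rfl)
                · exact hwa rfl
                · exact h2b hw.2
            have hcd : ({w ∈ S | G.degIn F w = 2} \ {a}).ncard
                = {w ∈ S | G.degIn F w = 2}.ncard - 1 :=
              Set.ncard_diff_singleton_of_mem haL
            have hposL : 0 < {w ∈ S | G.degIn F w = 2}.ncard :=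
              (Set.ncard_pos (Set.toFinite _)).mpr ⟨a, haL⟩
            rw [hLd] at hcardL'
            omega
          · have h2a : ¬ G.degIn F a = 2 := fun hc => hboth ⟨hc, h2b⟩
            have hbL : b ∈ {w ∈ S | G.degIn F w = 2} := ⟨hbS, h2b⟩
            have hLd : {w ∈ S | G.degIn F w = 2} \ {a, b}
                = {w ∈ S | G.degIn F w = 2} \ {b} := by
              ext w
              simp only [Set.mem_diff, Set.mem_insert_iff, Set.mem_singleton_iff,
                Set.mem_setOf_eq]
              constructor
              · rintro ⟨hw, hwab⟩
                exact ⟨hw, fun hc => hwab (Or.inr hc)⟩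
              · rintro ⟨hw, hwb⟩
                refine ⟨hw, ?_⟩
                rintro (rfl | rfl)
                · exact h2a hw.2
                · exact hwb rfl
            have hcd : ({w ∈ S | G.degIn F w = 2} \ {b}).ncard
                = {w ∈ S | G.degIn F w = 2}.ncard - 1 :=
              Set.ncard_diff_singleton_of_mem hbL
            have hposL : 0 < {w ∈ S | G.degIn F w = 2}.ncard :=
              (Set.ncard_pos (Set.toFinite _)).mpr ⟨b, hbL⟩
            rw [hLd] at hcardL'
            omega
      · -- connectivity
        rw [hdiffB]
        have hbase : Conn G S (insert e1 (insert e2 ((F \ X) \ {e}))) := by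
          intro u hu w hw
          refine rtg_lift (fun x y hr => lift_subdiv G
            (C' := insert e1 (insert e2 ((F \ X) \ {e}))) hab h1 h2 ?_ (Or.inl rfl)
            (Or.inr (Or.inl rfl)) hr) (hconn u hu w hw)
          exact fun f hf hne => Or.inr (Or.inr ⟨hf, fun hc => hne (Set.mem_singleton_iff.mp hc)⟩)
        exact conn_insert_vertex G haS (Or.inl rfl) h1 hbase
      · -- no cut edge
        intro f hf
        rw [hdiffB] at hf ⊢
        rcases hf with hfe | hfe | hf
        · -- remove e1 : use e2 to attach v, and F\X minus e connects S
          rw [hfe]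
          have hbase : Conn G S ((insert e1 (insert e2 ((F \ X) \ {e}))) \ {e1}) := by
            refine (hcut e heD).mono G (fun g hg => ⟨Or.inr (Or.inr hg), ?_⟩)
            exact fun hc => he1F ((Set.mem_singleton_iff.mp hc) ▸ hg.1.1)
          refine conn_insert_vertex G hbS ⟨Or.inr (Or.inl rfl), ?_⟩ h2 hbase
          exact fun hc => h12 (Set.mem_singleton_iff.mp hc).symm
        · -- remove e2 : use e1 to attach v
          rw [hfe]
          have hbase : Conn G S ((insert e1 (insert e2 ((F \ X) \ {e}))) \ {e2}) := by
            refine (hcut e heD).mono G (fun g hg => ⟨Or.inr (Or.inr hg), ?_⟩)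
            exact fun hc => he2F ((Set.mem_singleton_iff.mp hc) ▸ hg.1.1)
          refine conn_insert_vertex G haS ⟨Or.inl rfl, ?_⟩ h1 hbase
          exact fun hc => h12 (Set.mem_singleton_iff.mp hc)
        · -- remove an old edge f ∈ (F \ X) \ {e}
          have hfF : f ∈ F := hf.1.1
          have hfe1 : e1 ≠ f := fun hc => he1F (hc ▸ hfF)
          have hfe2 : e2 ≠ f := fun hc => he2F (hc ▸ hfF)
          have hbase : Conn G S ((insert e1 (insert e2 ((F \ X) \ {e}))) \ {f}) := by
            intro u hu w hw
            refine rtg_lift (fun x y hr => lift_subdiv G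
              (C' := (insert e1 (insert e2 ((F \ X) \ {e}))) \ {f}) hab h1 h2 ?_
              ⟨Or.inl rfl, fun hc => hfe1 (Set.mem_singleton_iff.mp hc)⟩
              ⟨Or.inr (Or.inl rfl), fun hc => hfe2 (Set.mem_singleton_iff.mp hc)⟩ hr)
              (hcut f hf.1 u hu w hw)
            rintro g ⟨hg, hgf⟩ hge
            exact ⟨Or.inr (Or.inr ⟨hg, fun hc => hge (Set.mem_singleton_iff.mp hc)⟩), hgf⟩
          exact conn_insert_vertex G haS
            ⟨Or.inl rfl, fun hc => hfe1 (Set.mem_singleton_iff.mp hc)⟩ h1 hbase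
      · -- two distinct incident edges at every vertex
        rw [hdiffB]
        intro w hw
        rcases hw with rfl | hw
        · exact ⟨e1, e2, h12, Or.inl rfl, Or.inr (Or.inl rfl), hve1, hve2⟩
        · obtain ⟨p, q, hpq, hp, hq, hwp, hwq⟩ := htwo w hw
          by_cases hwa : w = a
          · subst hwa
            by_cases hpe : p = e
            · refine ⟨e1, q, fun hc => he1F (hc ▸ hq.1), Or.inl rfl,
                Or.inr (Or.inr ⟨hq, fun hc => hpq (hpe.trans (Set.mem_singleton_iff.mp hc).symm)⟩),
                hva, hwq⟩
            · exact ⟨e1, p, fun hc => he1F (hc ▸ hp.1), Or.inl rfl,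
                Or.inr (Or.inr ⟨hp, fun hc => hpe (Set.mem_singleton_iff.mp hc)⟩),
                hva, hwp⟩
          by_cases hwb : w = b
          · subst hwb
            by_cases hpe : p = e
            · refine ⟨e2, q, fun hc => he2F (hc ▸ hq.1), Or.inr (Or.inl rfl),
                Or.inr (Or.inr ⟨hq, fun hc => hpq (hpe.trans (Set.mem_singleton_iff.mp hc).symm)⟩),
                hvb, hwq⟩
            · exact ⟨e2, p, fun hc => he2F (hc ▸ hp.1), Or.inr (Or.inl rfl),
                Or.inr (Or.inr ⟨hp, fun hc => hpe (Set.mem_singleton_iff.mp hc)⟩),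
                hvb, hwp⟩
          · have hpe : p ≠ e := by
              rintro rfl
              rw [hab, Sym2.mem_iff] at hwp
              rcases hwp with rfl | rfl
              · exact hwa rfl
              · exact hwb rfl
            have hqe : q ≠ e := by
              rintro rfl
              rw [hab, Sym2.mem_iff] at hwq
              rcases hwq with rfl | rfl
              · exact hwa rfl
              · exact hwb rfl
            exact ⟨p, q, hpq,
              Or.inr (Or.inr ⟨hp, fun hc => hpe (Set.mem_singleton_iff.mp hc)⟩),
              Or.inr (Or.inr ⟨hq, fun hc => hqe (Set.mem_singleton_iff.mp hc)⟩),
              hwp, hwq⟩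
    · -- construction A : keep X, attach v by e1 and e2
      push_neg at hleaf
      obtain ⟨h2a, h2b⟩ := hleaf
      have hdiffA : (insert e1 (insert e2 F)) \ X = insert e1 (insert e2 (F \ X)) := by
        ext g
        simp only [Set.mem_insert_iff, Set.mem_diff]
        constructor
        · rintro ⟨rfl | rfl | hg, hnot⟩
          · exact Or.inl rfl
          · exact Or.inr (Or.inl rfl)
          · exact Or.inr (Or.inr ⟨hg, hnot⟩)
        · rintro (rfl | rfl | ⟨hg, hgX⟩)
          · exact ⟨Or.inl rfl, fun hc => he1F (hXF hc)⟩
          · exact ⟨Or.inr (Or.inl rfl), fun hc => he2F (hXF hc)⟩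
          · exact ⟨Or.inr (Or.inr hg), hgX⟩
      refine ⟨X, fun g hg => Or.inr (Or.inr (hXF hg)), ?_, ?_, ?_, ?_⟩
      · -- cardinality bound
        have hLd : {w ∈ S | G.degIn F w = 2} \ {a, b} = {w ∈ S | G.degIn F w = 2} := by
          ext w
          simp only [Set.mem_diff, Set.mem_insert_iff, Set.mem_singleton_iff,
            Set.mem_setOf_eq]
          constructor
          · rintro ⟨hw, -⟩
            exact hw
          · intro hw
            refine ⟨hw, ?_⟩
            rintro (rfl | rfl)
            · exact h2a hw.2
            · exact h2b hw.2
        rw [hLd] at hcardL'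
        omega
      · rw [hdiffA]
        exact conn_insert_vertex G haS (Or.inl rfl) h1
          (hconn.mono G (fun g hg => Or.inr (Or.inr hg)))
      · intro f hf
        rw [hdiffA] at hf ⊢
        rcases hf with hfe | hfe | hf
        · rw [hfe]
          refine conn_insert_vertex G hbS
            ⟨Or.inr (Or.inl rfl), fun hc => h12 (Set.mem_singleton_iff.mp hc).symm⟩ h2 ?_
          refine hconn.mono G (fun g hg => ⟨Or.inr (Or.inr hg), ?_⟩)
          exact fun hc => he1F ((Set.mem_singleton_iff.mp hc) ▸ hg.1)
        · rw [hfe]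
          refine conn_insert_vertex G haS
            ⟨Or.inl rfl, fun hc => h12 (Set.mem_singleton_iff.mp hc)⟩ h1 ?_
          refine hconn.mono G (fun g hg => ⟨Or.inr (Or.inr hg), ?_⟩)
          exact fun hc => he2F ((Set.mem_singleton_iff.mp hc) ▸ hg.1)
        · have hfF : f ∈ F := hf.1
          have hfe1 : e1 ≠ f := fun hc => he1F (hc ▸ hfF)
          refine conn_insert_vertex G haS
            ⟨Or.inl rfl, fun hc => hfe1 (Set.mem_singleton_iff.mp hc)⟩ h1 ?_
          refine (hcut f hf).mono G (fun g hg => ⟨Or.inr (Or.inr hg.1), ?_⟩)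
          exact fun hc => hg.2 hc
      · rw [hdiffA]
        intro w hw
        rcases hw with rfl | hw
        · exact ⟨e1, e2, h12, Or.inl rfl, Or.inr (Or.inl rfl), hve1, hve2⟩
        · obtain ⟨p, q, hpq, hp, hq, hwp, hwq⟩ := htwo w hw
          exact ⟨p, q, hpq, Or.inr (Or.inr hp), Or.inr (Or.inr hq), hwp, hwq⟩

end TTProof
/-- Let `T` be a triangle-tree on `n ≥ 4` vertices with `t` leaves.
Then `T` contains a removable edge set of size at least `n − t − 1`, i.e. a set
`X ⊆ E(T)` with `T − X` 2-edge-connected. -/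
theorem stmt_15 (T : Multigraph) (hT : T.IsTriangleTree Set.univ Set.univ)
    (hn : 4 ≤ Fintype.card T.V) :
    ∃ X : Set T.E,
      Fintype.card T.V - {v : T.V | T.degree v = 2}.ncard - 1 ≤ X.ncard ∧
      T.TwoEdgeConnOn {e : T.E | e ∉ X} := by
  obtain ⟨X, hXF, hbound, hconn, hcut, -⟩ := TTProof.main T hT
  have hset : (Set.univ : Set T.E) \ X = {e : T.E | e ∉ X} := by
    ext g
    simp [Set.mem_diff]
  refine ⟨X, ?_, ?_, ?_⟩
  · have h1 : Fintype.card T.V = (Set.univ : Set T.V).ncard := by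
      rw [Set.ncard_univ, Nat.card_eq_fintype_card]
    have h2 : {v : T.V | T.degree v = 2}
        = {w ∈ (Set.univ : Set T.V) | T.degIn Set.univ w = 2} := by
      ext w
      have : T.degIn Set.univ w = T.degree w := by
        rw [Multigraph.degIn, Multigraph.degree]
        congr 1
        ext g
        simp
      simp [this]
    rw [h1, h2]
    exact hbound
  · intro u w
    have h := hconn u (Set.mem_univ u) w (Set.mem_univ w)
    rw [hset] at h
    exact h
  · intro f hf u w
    have h := hcut f (by rw [hset]; exact hf) u (Set.mem_univ u) w (Set.mem_univ w)
    rw [hset] at h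
    exact h
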